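/- arXiv:1912.04881 — 2 statements merged into one kernel-verified Lean document; each statement's English description precedes it below -/
import Mathlib

section
/- Let λ > 0, β > 0 with β ≠ 2λ, σ ∈ ℝ, and let j ≥ 1 be an integer. Then (σ²/(2β)) ∫_0^1 F_{j,0}(e^{2πit}) dt = σ² λ^{j−1} / ( 2β (λ+β)^{j+1} ). -/
open Complex Finset intervalIntegral

noncomputable section

/-- F_{j,τ}(z) = (z^j/(λ−β−λz)) (e^{−βτ}(1−z)²/(λ−(λ+β)z) − 2β e^{λ(z−1)τ}/(λ(λ+β−λz))). -/
def Ffun (lam beta : ℝ) (j : ℕ) (τ : ℝ) (z : ℂ) : ℂ :=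
  (z ^ j / (lam - beta - lam * z)) *
    (Complex.exp (-(beta : ℂ) * τ) * (1 - z) ^ 2 / (lam - (lam + beta) * z) -
      2 * beta * Complex.exp ((lam : ℂ) * (z - 1) * τ) / (lam * (lam + beta - lam * z)))

lemma abs_ecirc (t : ℝ) : ‖Complex.exp (2 * Real.pi * Complex.I * t)‖ = 1 := by
  rw [Complex.norm_exp]
  norm_num [Complex.mul_re, Complex.mul_im]

lemma abs_ecirc' (t : ℝ) : ‖Complex.exp (-(2 * Real.pi * Complex.I) * t)‖ = 1 := by
  rw [Complex.norm_exp]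
  norm_num [Complex.mul_re, Complex.mul_im]

lemma cont_ecirc : Continuous fun t : ℝ => Complex.exp (2 * Real.pi * Complex.I * t) :=
  Complex.continuous_exp.comp (continuous_const.mul Complex.continuous_ofReal)

lemma omega_ne : (2 * (Real.pi:ℂ) * Complex.I) ≠ 0 := by
  simp [Real.pi_ne_zero, Complex.I_ne_zero]

lemma int_pow (k : ℕ) (hk : 1 ≤ k) :
    ∫ t in (0:ℝ)..1, Complex.exp (2 * Real.pi * Complex.I * t) ^ k = 0 := by
  have hc : ((k : ℂ) * (2 * Real.pi * Complex.I)) ≠ 0 := by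
    apply mul_ne_zero
    · exact_mod_cast Nat.cast_ne_zero.mpr (by omega)
    · simp [Real.pi_ne_zero, Complex.I_ne_zero]
  have h1 : ∀ t : ℝ, Complex.exp (2 * Real.pi * Complex.I * t) ^ k
      = Complex.exp (((k : ℂ) * (2 * Real.pi * Complex.I)) * t) := by
    intro t
    rw [← Complex.exp_nat_mul]
    ring_nf
  simp only [h1]
  rw [integral_exp_mul_complex hc]
  have h2 : Complex.exp ((k : ℂ) * (2 * Real.pi * Complex.I) * ((1:ℝ):ℂ))
      = Complex.exp (2 * Real.pi * Complex.I) ^ k := by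
    rw [← Complex.exp_nat_mul]; norm_num
  rw [h2]
  simp [Complex.exp_two_pi_mul_I]

lemma int_inside (d : ℝ) (hd0 : 0 < d) (hd1 : d < 1) :
    ∫ t in (0:ℝ)..1, 1 / ((d:ℂ) - Complex.exp (2 * Real.pi * Complex.I * t)) = 0 := by
  set ω : ℂ := 2 * Real.pi * Complex.I with hω
  have hωne : ω ≠ 0 := omega_ne
  have hdne : (d:ℂ) ≠ 0 := by exact_mod_cast hd0.ne'
  have hwne : ∀ t : ℝ, (d:ℂ) - Complex.exp (ω * t) ≠ 0 := by
    intro t h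
    have : ‖(d:ℂ)‖ = 1 := by
      rw [show ((d:ℂ)) = Complex.exp (ω * t) by linear_combination h, hω]
      exact abs_ecirc t
    simp [Complex.norm_real, abs_of_pos hd0] at this
    linarith
  have hvre : ∀ t : ℝ, 0 < ((1:ℂ) - d * Complex.exp (-ω * t)).re := by
    intro t
    have hre : ((d:ℂ) * Complex.exp (-ω * t)).re ≤ d := by
      calc ((d:ℂ) * Complex.exp (-ω * t)).re
          ≤ ‖(d:ℂ) * Complex.exp (-ω * t)‖ := Complex.re_le_norm _
        _ = d := by
            rw [norm_mul, Complex.norm_real, Real.norm_eq_abs, abs_of_pos hd0, hω, abs_ecirc', mul_one]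
    simp only [Complex.sub_re, Complex.one_re]
    linarith
  have hvne : ∀ t : ℝ, ((1:ℂ) - d * Complex.exp (-ω * t)) ≠ 0 := by
    intro t h
    have := hvre t
    rw [h] at this
    simp at this
  have hslit : ∀ t : ℝ, ((1:ℂ) - d * Complex.exp (-ω * t)) ∈ Complex.slitPlane := by
    intro t
    rw [Complex.mem_slitPlane_iff]
    exact Or.inl (hvre t)
  set G : ℝ → ℂ := fun t => -((d:ℂ) * ω)⁻¹ * Complex.log ((1:ℂ) - d * Complex.exp (-ω * t))
    with hG
  have hderiv : ∀ t : ℝ, HasDerivAt G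
      (1 / ((d:ℂ) - Complex.exp (ω * t))) t := by
    intro t
    have h1 : HasDerivAt (fun s : ℂ => (1:ℂ) - d * Complex.exp (-ω * s))
        ((d:ℂ) * ω * Complex.exp (-ω * (t:ℂ))) (t:ℂ) := by
      have := ((Complex.hasDerivAt_exp (-ω * t)).comp (t:ℂ)
        ((hasDerivAt_id (t:ℂ)).const_mul (-ω)))
      have h2 := (this.const_mul (d:ℂ)).const_sub (1:ℂ)
      refine h2.congr_deriv ?_
      ring
    have h2 : HasDerivAt (fun s : ℂ => Complex.log ((1:ℂ) - d * Complex.exp (-ω * s)))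
        (((1:ℂ) - d * Complex.exp (-ω * (t:ℂ)))⁻¹ * ((d:ℂ) * ω * Complex.exp (-ω * (t:ℂ))))
        (t:ℂ) := by have := (Complex.hasDerivAt_log (hslit t)).comp (t:ℂ) h1; exact this
    have h3 := (h2.const_mul (-((d:ℂ) * ω)⁻¹)).comp_ofReal
    convert h3 using 1
    have hkey : ((1:ℂ) - d * Complex.exp (-ω * (t:ℂ)))⁻¹ * Complex.exp (-ω * (t:ℂ))
        = -(((d:ℂ) - Complex.exp (ω * t))⁻¹) := by
      have hee : Complex.exp (ω * (t:ℂ)) * Complex.exp (-ω * (t:ℂ)) = 1 := by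
        rw [← Complex.exp_add]; ring_nf; exact Complex.exp_zero
      have h4 := hvne t
      have h5 := hwne t
      field_simp
      simp only [neg_mul] at hee ⊢
      rw [div_eq_iff (by simpa [neg_mul] using hvne t)]
      linear_combination -hee
    calc 1 / ((d:ℂ) - Complex.exp (ω * t))
        = -((d:ℂ) * ω)⁻¹ * ((d:ℂ) * ω) * (-(((d:ℂ) - Complex.exp (ω * t))⁻¹)) := by
          rw [neg_mul, inv_mul_cancel₀ (mul_ne_zero hdne hωne)]
          rw [one_div]; ring
      _ = -((d:ℂ) * ω)⁻¹ *
          (((1:ℂ) - d * Complex.exp (-ω * (t:ℂ)))⁻¹ * ((d:ℂ) * ω * Complex.exp (-ω * (t:ℂ)))) := by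
          rw [show ((1:ℂ) - d * Complex.exp (-ω * (t:ℂ)))⁻¹ * ((d:ℂ) * ω * Complex.exp (-ω * (t:ℂ)))
            = ((d:ℂ) * ω) * (((1:ℂ) - d * Complex.exp (-ω * (t:ℂ)))⁻¹ * Complex.exp (-ω * (t:ℂ))) by ring,
            hkey]
          ring
  have hcont : Continuous fun t : ℝ => 1 / ((d:ℂ) - Complex.exp (ω * t)) :=
    continuous_const.div (continuous_const.sub cont_ecirc) hwne
  rw [integral_eq_sub_of_hasDerivAt (fun t _ => hderiv t) (hcont.intervalIntegrable 0 1)]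
  have he1 : Complex.exp (-ω * ((1:ℝ):ℂ)) = 1 := by
    rw [Complex.ofReal_one, mul_one, Complex.exp_neg, hω, Complex.exp_two_pi_mul_I, inv_one]
  simp only [hG, he1, Complex.ofReal_zero, mul_zero, Complex.exp_zero, mul_one]
  ring

lemma int_outside (c : ℝ) (hc : 1 < c) :
    ∫ t in (0:ℝ)..1, Complex.exp (2 * Real.pi * Complex.I * t) /
      ((c:ℂ) - Complex.exp (2 * Real.pi * Complex.I * t)) = 0 := by
  set ω : ℂ := 2 * Real.pi * Complex.I with hω
  have hωne : ω ≠ 0 := omega_ne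
  have hwne : ∀ t : ℝ, (c:ℂ) - Complex.exp (ω * t) ≠ 0 := by
    intro t h
    have : ‖(c:ℂ)‖ = 1 := by
      rw [show ((c:ℂ)) = Complex.exp (ω * t) by linear_combination h, hω]
      exact abs_ecirc t
    simp [Complex.norm_real, abs_of_pos (lt_trans one_pos hc)] at this
    linarith
  have hslit : ∀ t : ℝ, ((c:ℂ) - Complex.exp (ω * t)) ∈ Complex.slitPlane := by
    intro t
    rw [Complex.mem_slitPlane_iff]
    left
    have hre : (Complex.exp (ω * t)).re ≤ 1 := by
      calc (Complex.exp (ω * t)).re ≤ ‖Complex.exp (ω * t)‖ := Complex.re_le_norm _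
        _ = 1 := by rw [hω]; exact abs_ecirc t
    simp only [Complex.sub_re, Complex.ofReal_re]
    linarith
  set G : ℝ → ℂ := fun t => -(ω⁻¹) * Complex.log ((c:ℂ) - Complex.exp (ω * t)) with hG
  have hderiv : ∀ t : ℝ, HasDerivAt G
      (Complex.exp (ω * t) / ((c:ℂ) - Complex.exp (ω * t))) t := by
    intro t
    have h1 : HasDerivAt (fun s : ℂ => (c:ℂ) - Complex.exp (ω * s))
        (-(ω * Complex.exp (ω * (t:ℂ)))) (t:ℂ) := by
      have := ((Complex.hasDerivAt_exp (ω * t)).comp (t:ℂ)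
        ((hasDerivAt_id (t:ℂ)).const_mul ω))
      simpa [mul_comm] using (this.const_sub (c:ℂ))
    have h2 : HasDerivAt (fun s : ℂ => Complex.log ((c:ℂ) - Complex.exp (ω * s)))
        (((c:ℂ) - Complex.exp (ω * t))⁻¹ * (-(ω * Complex.exp (ω * (t:ℂ))))) (t:ℂ) :=
      by have := (Complex.hasDerivAt_log (hslit t)).comp (t:ℂ) h1; exact this
    have h3 := (h2.const_mul (-(ω⁻¹))).comp_ofReal
    convert h3 using 1
    have : -(ω⁻¹) * (((c:ℂ) - Complex.exp (ω * t))⁻¹ * (-(ω * Complex.exp (ω * (t:ℂ)))))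
        = (ω⁻¹ * ω) * (Complex.exp (ω * t) / ((c:ℂ) - Complex.exp (ω * t))) := by
      rw [div_eq_mul_inv]; ring
    rw [this, inv_mul_cancel₀ hωne, one_mul]
  have hcont : Continuous fun t : ℝ => Complex.exp (ω * t) / ((c:ℂ) - Complex.exp (ω * t)) :=
    cont_ecirc.div (continuous_const.sub cont_ecirc) hwne
  rw [integral_eq_sub_of_hasDerivAt (fun t _ => hderiv t) (hcont.intervalIntegrable 0 1)]
  simp only [hG, Complex.ofReal_one, mul_one, Complex.ofReal_zero, mul_zero,
    Complex.exp_zero, hω, Complex.exp_two_pi_mul_I]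
  ring

lemma circ_sub_ne (a : ℝ) (ha : 0 < a) (ha1 : a ≠ 1) (t : ℝ) :
    (a:ℂ) - Complex.exp (2 * Real.pi * Complex.I * t) ≠ 0 := by
  intro h
  have : ‖(a:ℂ)‖ = 1 := by
    rw [show ((a:ℂ)) = Complex.exp (2 * Real.pi * Complex.I * t) by linear_combination h]
    exact abs_ecirc t
  simp [Complex.norm_real, abs_of_pos ha] at this
  exact ha1 this

lemma cont_term (m : ℕ) (a : ℂ) (ha : ∀ t : ℝ, a - Complex.exp (2 * Real.pi * Complex.I * t) ≠ 0) :
    Continuous fun t : ℝ => Complex.exp (2 * Real.pi * Complex.I * t) ^ m /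
      (a - Complex.exp (2 * Real.pi * Complex.I * t)) :=
  (cont_ecirc.pow m).div (continuous_const.sub cont_ecirc) ha

lemma step_int (a : ℂ) (ha : ∀ t : ℝ, a - Complex.exp (2 * Real.pi * Complex.I * t) ≠ 0) (m : ℕ) :
    ∫ t in (0:ℝ)..1, Complex.exp (2 * Real.pi * Complex.I * t) ^ (m+1) /
        (a - Complex.exp (2 * Real.pi * Complex.I * t))
      = -(∫ t in (0:ℝ)..1, Complex.exp (2 * Real.pi * Complex.I * t) ^ m)
        + a * ∫ t in (0:ℝ)..1, Complex.exp (2 * Real.pi * Complex.I * t) ^ m /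
            (a - Complex.exp (2 * Real.pi * Complex.I * t)) := by
  have hpt : ∀ t : ℝ, Complex.exp (2 * Real.pi * Complex.I * t) ^ (m+1) /
      (a - Complex.exp (2 * Real.pi * Complex.I * t))
      = -(Complex.exp (2 * Real.pi * Complex.I * t) ^ m)
        + a * (Complex.exp (2 * Real.pi * Complex.I * t) ^ m /
          (a - Complex.exp (2 * Real.pi * Complex.I * t))) := by
    intro t
    field_simp [ha t]
    ring
  simp only [hpt]
  rw [integral_add (f := fun t => -Complex.exp (2 * Real.pi * Complex.I * t) ^ m)
    (g := fun t => a * (Complex.exp (2 * Real.pi * Complex.I * t) ^ m /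
      (a - Complex.exp (2 * Real.pi * Complex.I * t)))) ((cont_ecirc.pow m).neg.intervalIntegrable 0 1)
    ((continuous_const.mul (cont_term m a ha)).intervalIntegrable 0 1),
    integral_neg, integral_const_mul]

lemma int_J (d : ℝ) (hd0 : 0 < d) (hd1 : d < 1) (m : ℕ) :
    ∫ t in (0:ℝ)..1, Complex.exp (2 * Real.pi * Complex.I * t) ^ (m+1) /
      ((d:ℂ) - Complex.exp (2 * Real.pi * Complex.I * t)) = -(d:ℂ)^m := by
  have ha := circ_sub_ne d hd0 (by linarith)
  induction m with
  | zero =>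
      rw [step_int _ ha 0]
      simp only [pow_zero]
      rw [int_inside d hd0 hd1]
      norm_num
  | succ n ih =>
      rw [step_int _ ha (n+1), int_pow (n+1) (by omega), ih]
      ring

lemma int_K (c : ℝ) (hc : 1 < c) (m : ℕ) :
    ∫ t in (0:ℝ)..1, Complex.exp (2 * Real.pi * Complex.I * t) ^ (m+1) /
      ((c:ℂ) - Complex.exp (2 * Real.pi * Complex.I * t)) = 0 := by
  have ha := circ_sub_ne c (by linarith) (by linarith)
  induction m with
  | zero => simpa using int_outside c hc
  | succ n ih =>
      rw [step_int _ ha (n+1), int_pow (n+1) (by omega), ih]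
      ring

lemma Ffun_decomp (lam beta : ℝ) (hlam : 0 < lam) (hbeta : 0 < beta) (hne : beta ≠ 2 * lam)
    (j : ℕ) (z : ℂ) (hz : ‖z‖ = 1) :
    Ffun lam beta j 0 z
      = (1 / ((lam:ℂ) * (lam + beta))) * z ^ j
        - (1 / ((lam:ℂ) + beta) ^ 2) * (z ^ j / (((lam / (lam + beta) : ℝ) : ℂ) - z))
        + (1 / (lam:ℂ) ^ 2) * (z ^ j / ((((lam + beta) / lam : ℝ) : ℂ) - z)) := by
  have hlb : (0:ℝ) < lam + beta := by linarith
  have hlamC : (lam:ℂ) ≠ 0 := by exact_mod_cast hlam.ne'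
  have hlbC : ((lam:ℂ) + beta) ≠ 0 := by exact_mod_cast hlb.ne'
  -- A ≠ 0
  have hA : (lam:ℂ) - beta - lam * z ≠ 0 := by
    intro h
    have hz' : ((lam - beta : ℝ) : ℂ) = (lam:ℂ) * z := by push_cast; linear_combination h
    have habs : |lam - beta| = lam := by
      have := congrArg (norm : ℂ → ℝ) hz'
      rw [norm_mul, Complex.norm_real, Complex.norm_real, hz, mul_one, Real.norm_eq_abs, Real.norm_eq_abs] at this
      rwa [abs_of_pos hlam] at this
    have h2 : (lam - beta)^2 = lam^2 := by
      rw [← _root_.sq_abs (lam - beta), habs]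
    have h3 : beta * (beta - 2 * lam) = 0 := by linear_combination h2
    rcases mul_eq_zero.mp h3 with h | h
    · linarith
    · exact hne (by linarith)
  -- B ≠ 0, via d - z ≠ 0
  have hdz : (((lam / (lam + beta) : ℝ)) : ℂ) - z ≠ 0 := by
    intro h
    have habs : |lam / (lam + beta)| = 1 := by
      have hz' : (((lam / (lam + beta) : ℝ)) : ℂ) = z := by linear_combination h
      have := congrArg (norm : ℂ → ℝ) hz'
      rwa [Complex.norm_real, hz, Real.norm_eq_abs] at this
    rw [abs_of_pos (by positivity), div_eq_one_iff_eq hlb.ne'] at habs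
    linarith
  have hcz : ((((lam + beta) / lam : ℝ)) : ℂ) - z ≠ 0 := by
    intro h
    have habs : |(lam + beta) / lam| = 1 := by
      have hz' : ((((lam + beta) / lam : ℝ)) : ℂ) = z := by linear_combination h
      have := congrArg (norm : ℂ → ℝ) hz'
      rwa [Complex.norm_real, hz, Real.norm_eq_abs] at this
    rw [abs_of_pos (by positivity), div_eq_one_iff_eq hlam.ne'] at habs
    linarith
  unfold Ffun
  push_cast
  simp only [Complex.ofReal_zero, mul_zero, Complex.exp_zero, one_mul, mul_one]
  have hB : (lam:ℂ) - (lam + beta) * z ≠ 0 := by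
    intro h
    apply hdz
    push_cast
    field_simp
    linear_combination h
  have hC : (lam:ℂ) + beta - lam * z ≠ 0 := by
    intro h
    apply hcz
    push_cast
    field_simp
    linear_combination h
  have hdz' : (lam:ℂ) / ((lam:ℂ) + beta) - z ≠ 0 := by push_cast at hdz; exact hdz
  have hcz' : ((lam:ℂ) + beta) / (lam:ℂ) - z ≠ 0 := by push_cast at hcz; exact hcz
  set A : ℂ := (lam:ℂ) - beta - lam * z with hAdef
  set B : ℂ := (lam:ℂ) - ((lam:ℂ) + beta) * z with hBdef
  set C : ℂ := (lam:ℂ) + beta - lam * z with hCdef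
  set P : ℂ := (lam:ℂ) * z^2 - 2*((lam:ℂ)+beta)*z + lam with hPdef
  have hBC : (lam:ℂ) * (B * C) ≠ 0 := mul_ne_zero hlamC (mul_ne_zero hB hC)
  have hS : (1 - z)^2 / B - 2*(beta:ℂ) / ((lam:ℂ) * C) = A * P / ((lam:ℂ) * (B * C)) := by
    rw [div_sub_div _ _ hB (mul_ne_zero hlamC hC),
      div_eq_div_iff (mul_ne_zero hB (mul_ne_zero hlamC hC)) hBC]
    rw [hAdef, hBdef, hCdef, hPdef]
    ring
  rw [hS]
  have hL : z ^ j / A * (A * P / ((lam:ℂ) * (B * C))) = z ^ j * P / ((lam:ℂ) * (B * C)) := by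
    rw [div_mul_div_comm, div_eq_div_iff (mul_ne_zero hA hBC) hBC]
    ring
  rw [hL]
  have e1 : z ^ j / ((lam:ℂ) / ((lam:ℂ) + beta) - z)
      = ((lam:ℂ) + beta) * z ^ j / ((lam:ℂ) - ((lam:ℂ) + beta) * z) := by
    rw [div_eq_div_iff hdz' hB]
    field_simp
    ring
  have e2 : z ^ j / (((lam:ℂ) + beta) / (lam:ℂ) - z)
      = (lam:ℂ) * z ^ j / ((lam:ℂ) + beta - (lam:ℂ) * z) := by
    rw [div_eq_div_iff hcz' hC]
    field_simp
    ring
  have r1 : (1:ℂ) / ((lam:ℂ) + beta)^2 * (((lam:ℂ) + beta) * z ^ j / B)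
      = z ^ j / (((lam:ℂ) + beta) * B) := by
    rw [div_mul_div_comm, div_eq_div_iff (mul_ne_zero (pow_ne_zero 2 hlbC) hB)
      (mul_ne_zero hlbC hB)]
    ring
  have r2 : (1:ℂ) / (lam:ℂ)^2 * ((lam:ℂ) * z ^ j / C) = z ^ j / ((lam:ℂ) * C) := by
    rw [div_mul_div_comm, div_eq_div_iff (mul_ne_zero (pow_ne_zero 2 hlamC) hC)
      (mul_ne_zero hlamC hC)]
    ring
  rw [e1, e2, r1, r2, one_div, inv_mul_eq_div]
  rw [div_sub_div _ _ (mul_ne_zero hlamC hlbC) (mul_ne_zero hlbC hB)]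
  rw [div_add_div _ _ (mul_ne_zero (mul_ne_zero hlamC hlbC) (mul_ne_zero hlbC hB))
    (mul_ne_zero hlamC hC)]
  rw [div_eq_div_iff hBC (mul_ne_zero (mul_ne_zero (mul_ne_zero hlamC hlbC)
    (mul_ne_zero hlbC hB)) (mul_ne_zero hlamC hC))]
  rw [hPdef, hBdef, hCdef]
  ring

/-- for β ≠ 2λ and j ≥ 1,
(σ²/(2β)) ∫₀¹ F_{j,0}(e^{2πit}) dt = σ² λ^{j−1} / (2β(λ+β)^{j+1}). -/
theorem stmt13 (lam beta σ : ℝ) (hlam : 0 < lam) (hbeta : 0 < beta) (hne : beta ≠ 2 * lam)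
    (j : ℕ) (hj : 1 ≤ j) :
    ((σ : ℂ) ^ 2 / (2 * beta)) *
        ∫ t in (0 : ℝ)..1, Ffun lam beta j 0 (Complex.exp (2 * Real.pi * Complex.I * t)) =
      ((σ ^ 2 * lam ^ (j - 1) / (2 * beta * (lam + beta) ^ (j + 1)) : ℝ) : ℂ) := by
  obtain ⟨m, rfl⟩ : ∃ m, j = m + 1 := ⟨j - 1, by omega⟩
  have hlb : (0:ℝ) < lam + beta := by linarith
  set d : ℝ := lam / (lam + beta) with hd
  set c : ℝ := (lam + beta) / lam with hc
  have hd0 : 0 < d := by positivity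
  have hd1 : d < 1 := by rw [hd, div_lt_one hlb]; linarith
  have hc1 : 1 < c := by rw [hc, lt_div_iff₀ hlam]; linarith
  have hdne : ∀ t : ℝ, ((d:ℝ):ℂ) - Complex.exp (2 * Real.pi * Complex.I * t) ≠ 0 :=
    circ_sub_ne d hd0 hd1.ne
  have hcne : ∀ t : ℝ, ((c:ℝ):ℂ) - Complex.exp (2 * Real.pi * Complex.I * t) ≠ 0 :=
    circ_sub_ne c (by linarith) hc1.ne'
  have hpt : ∀ t : ℝ, Ffun lam beta (m+1) 0 (Complex.exp (2 * Real.pi * Complex.I * t))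
      = (1 / ((lam:ℂ) * (lam + beta))) * Complex.exp (2 * Real.pi * Complex.I * t) ^ (m+1)
        - (1 / ((lam:ℂ) + beta) ^ 2) * (Complex.exp (2 * Real.pi * Complex.I * t) ^ (m+1) /
            ((d:ℂ) - Complex.exp (2 * Real.pi * Complex.I * t)))
        + (1 / (lam:ℂ) ^ 2) * (Complex.exp (2 * Real.pi * Complex.I * t) ^ (m+1) /
            ((c:ℂ) - Complex.exp (2 * Real.pi * Complex.I * t))) := fun t =>
    Ffun_decomp lam beta hlam hbeta hne (m+1) _ (abs_ecirc t)
  have hi1 : IntervalIntegrable (fun t : ℝ =>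
      (1 / ((lam:ℂ) * (lam + beta))) * Complex.exp (2 * Real.pi * Complex.I * t) ^ (m+1))
      MeasureTheory.volume 0 1 :=
    (continuous_const.mul (cont_ecirc.pow (m+1))).intervalIntegrable 0 1
  have hi2 : IntervalIntegrable (fun t : ℝ =>
      (1 / ((lam:ℂ) + beta) ^ 2) * (Complex.exp (2 * Real.pi * Complex.I * t) ^ (m+1) /
        ((d:ℂ) - Complex.exp (2 * Real.pi * Complex.I * t)))) MeasureTheory.volume 0 1 :=
    (continuous_const.mul (cont_term (m+1) _ hdne)).intervalIntegrable 0 1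
  have hi3 : IntervalIntegrable (fun t : ℝ =>
      (1 / (lam:ℂ) ^ 2) * (Complex.exp (2 * Real.pi * Complex.I * t) ^ (m+1) /
        ((c:ℂ) - Complex.exp (2 * Real.pi * Complex.I * t)))) MeasureTheory.volume 0 1 :=
    (continuous_const.mul (cont_term (m+1) _ hcne)).intervalIntegrable 0 1
  have hsplit : ∫ t in (0:ℝ)..1, Ffun lam beta (m+1) 0 (Complex.exp (2 * Real.pi * Complex.I * t))
      = (1 / ((lam:ℂ) * (lam + beta))) *
          (∫ t in (0:ℝ)..1, Complex.exp (2 * Real.pi * Complex.I * t) ^ (m+1))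
        - (1 / ((lam:ℂ) + beta) ^ 2) *
          (∫ t in (0:ℝ)..1, Complex.exp (2 * Real.pi * Complex.I * t) ^ (m+1) /
            ((d:ℂ) - Complex.exp (2 * Real.pi * Complex.I * t)))
        + (1 / (lam:ℂ) ^ 2) *
          (∫ t in (0:ℝ)..1, Complex.exp (2 * Real.pi * Complex.I * t) ^ (m+1) /
            ((c:ℂ) - Complex.exp (2 * Real.pi * Complex.I * t))) := by
    simp only [hpt]
    rw [integral_add (hi1.sub hi2) hi3, integral_sub hi1 hi2,
      integral_const_mul, integral_const_mul, integral_const_mul]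
  rw [hsplit, int_pow (m+1) (by omega), int_J d hd0 hd1 m, int_K c hc1 m]
  rw [hd]
  simp only [Nat.add_sub_cancel]
  push_cast
  have hlamC : (lam:ℂ) ≠ 0 := by exact_mod_cast hlam.ne'
  have hlbC : ((lam:ℂ) + beta) ≠ 0 := by exact_mod_cast hlb.ne'
  have hbC : (beta:ℂ) ≠ 0 := by exact_mod_cast hbeta.ne'
  field_simp
  ring_nf
  have hm : ((lam:ℂ) + beta)⁻¹ ^ m * ((lam:ℂ) + beta) ^ m = 1 := by
    rw [inv_pow, inv_mul_cancel₀ (pow_ne_zero m hlbC)]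
  linear_combination ((σ:ℂ)^2*(lam:ℂ)^2*(lam:ℂ)^m*(beta:ℂ)^2 + (σ:ℂ)^2*(lam:ℂ)^3*(lam:ℂ)^m*(beta:ℂ)*2
    + (σ:ℂ)^2*(lam:ℂ)^4*(lam:ℂ)^m) * hm
end
end

section
/- Let λ > 0, β > 0 with β ≠ 2λ, and σ ∈ ℝ. Then (σ²/(2β)) ∫_0^1 F_{0,0}(e^{2πit}) dt = σ² / ( λ β (λ+β) ). -/
open Complex Finset intervalIntegral

noncomputable section

lemma hder_exp (t : ℝ) : HasDerivAt (fun s : ℝ => Complex.exp (2 * Real.pi * I * s))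
    (2 * Real.pi * I * Complex.exp (2 * Real.pi * I * t)) t := by
  have h0 : HasDerivAt (fun s : ℝ => ((s : ℂ))) 1 t := by
    simpa using (hasDerivAt_id t).ofReal_comp
  have h1 : HasDerivAt (fun s : ℝ => (2 * Real.pi * I * s : ℂ)) (2 * Real.pi * I) t := by
    simpa using h0.const_mul (2 * Real.pi * I)
  simpa [mul_comm] using h1.cexp

lemma abs_exp_unit (t : ℝ) : ‖Complex.exp (2 * Real.pi * I * t)‖ = 1 := by
  rw [Complex.norm_exp]
  norm_num [Complex.mul_re, Complex.mul_im]

lemma sub_exp_ne (a : ℂ) (ha : ‖a‖ ≠ 1) (t : ℝ) :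
    a - Complex.exp (2 * Real.pi * I * t) ≠ 0 := by
  intro h
  apply ha
  rw [sub_eq_zero] at h
  rw [h, abs_exp_unit]

lemma integral_inv_gt (a : ℂ) (ha : 1 < ‖a‖) :
    ∫ t in (0:ℝ)..1, (a - Complex.exp (2 * Real.pi * I * t))⁻¹ = a⁻¹ := by
  have ha0 : a ≠ 0 := by
    intro h; rw [h] at ha; simp at ha; linarith
  have hne : ∀ t : ℝ, a - Complex.exp (2 * Real.pi * I * t) ≠ 0 :=
    sub_exp_ne a (by linarith) 
  have hslit : ∀ t : ℝ, (1 - Complex.exp (2 * Real.pi * I * t) / a) ∈ Complex.slitPlane := by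
    intro t
    rw [Complex.mem_slitPlane_iff]
    left
    have h1 : (Complex.exp (2 * Real.pi * I * t) / a).re ≤ ‖Complex.exp (2 * Real.pi * I * t) / a‖ :=
      Complex.re_le_norm _
    have h2 : ‖Complex.exp (2 * Real.pi * I * t) / a‖ = ‖a‖⁻¹ := by
      rw [norm_div, abs_exp_unit]; ring
    have h3 : ‖a‖⁻¹ < 1 := by
      rw [inv_lt_one_iff₀]; right; exact ha
    simp only [Complex.sub_re, Complex.one_re]
    linarith [h1.trans_lt (h2 ▸ h3)]
  have hd : ∀ t : ℝ, HasDerivAt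
      (fun s : ℝ => (s : ℂ) / a - (2 * Real.pi * I * a)⁻¹ * Complex.log (1 - Complex.exp (2 * Real.pi * I * s) / a))
      ((a - Complex.exp (2 * Real.pi * I * t))⁻¹) t := by
    intro t
    have h0 : HasDerivAt (fun s : ℝ => ((s : ℂ) / a)) (1 / a) t := by
      simpa using (Complex.ofRealCLM.hasDerivAt (x := t)).div_const a
    have hin : HasDerivAt (fun s : ℝ => (1 - Complex.exp (2 * Real.pi * I * s) / a))
        (-(2 * Real.pi * I * Complex.exp (2 * Real.pi * I * t) / a)) t := by
      simpa using (((hder_exp t).div_const a).const_sub 1)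
    have hlog := (hin.clog_real (hslit t)).const_mul ((2 * Real.pi * I * a)⁻¹)
    have := h0.sub hlog
    have hpi : (2 * Real.pi * I : ℂ) ≠ 0 := by
      simp [Real.pi_ne_zero, Complex.I_ne_zero]
    have h1a : (1 : ℂ) - Complex.exp (2 * Real.pi * I * t) / a ≠ 0 := Complex.slitPlane_ne_zero (hslit t)
    have heq : (1 / a -
      (2 * Real.pi * I * a)⁻¹ *
        (-(2 * Real.pi * I * Complex.exp (2 * Real.pi * I * t) / a) / (1 - Complex.exp (2 * Real.pi * I * t) / a)))
        = (a - Complex.exp (2 * Real.pi * I * t))⁻¹ := by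
      rw [eq_comm, inv_eq_iff_eq_inv, eq_comm, inv_eq_one_div]
      field_simp [hne t, ha0, Complex.I_ne_zero, Complex.ofReal_ne_zero.mpr Real.pi_ne_zero]
      ring_nf
    rw [heq] at this
    exact this
  have hcont : Continuous fun t : ℝ => (a - Complex.exp (2 * Real.pi * I * t))⁻¹ := by
    apply Continuous.inv₀
    · exact continuous_const.sub (Complex.continuous_exp.comp (by continuity))
    · exact fun t => hne t
  rw [integral_eq_sub_of_hasDerivAt (fun t _ => hd t) (hcont.intervalIntegrable 0 1)]
  have he1 : Complex.exp (2 * Real.pi * I * (1:ℝ)) = 1 := by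
    rw [show (2 * Real.pi * I * (1:ℝ) : ℂ) = 2 * Real.pi * I by push_cast; ring, Complex.exp_two_pi_mul_I]
  have he0 : Complex.exp (2 * Real.pi * I * (0:ℝ)) = 1 := by norm_num
  rw [he1, he0]
  push_cast
  ring

lemma abs_exp_unit' (t : ℝ) : ‖Complex.exp (-(2 * Real.pi * I) * t)‖ = 1 := by
  rw [Complex.norm_exp]
  norm_num [Complex.mul_re, Complex.mul_im]

lemma integral_inv_lt (a : ℂ) (ha : ‖a‖ < 1) (ha0 : a ≠ 0) :
    ∫ t in (0:ℝ)..1, (a - Complex.exp (2 * Real.pi * I * t))⁻¹ = 0 := by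
  have hne : ∀ t : ℝ, a - Complex.exp (2 * Real.pi * I * t) ≠ 0 := by
    intro t h
    rw [sub_eq_zero] at h
    have : ‖Complex.exp (2 * Real.pi * I * (t:ℝ))‖ = 1 := by
      rw [Complex.norm_exp]; norm_num [Complex.mul_re, Complex.mul_im]
    rw [← h] at this; linarith [this]
  have habs : ∀ t : ℝ, ‖a * Complex.exp (-(2 * Real.pi * I) * t)‖ < 1 := by
    intro t; rw [norm_mul, abs_exp_unit']; simpa using ha
  have hslit : ∀ t : ℝ, (1 - a * Complex.exp (-(2 * Real.pi * I) * t)) ∈ Complex.slitPlane := by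
    intro t
    rw [Complex.mem_slitPlane_iff]
    left
    have h1 := Complex.re_le_norm (a * Complex.exp (-(2 * Real.pi * I) * t))
    simp only [Complex.sub_re, Complex.one_re]
    linarith [habs t]
  have hne2 : ∀ t : ℝ, (1 : ℂ) - a * Complex.exp (-(2 * Real.pi * I) * t) ≠ 0 :=
    fun t => Complex.slitPlane_ne_zero (hslit t)
  have hd : ∀ t : ℝ, HasDerivAt
      (fun s : ℝ => -(2 * Real.pi * I * a)⁻¹ * Complex.log (1 - a * Complex.exp (-(2 * Real.pi * I) * s)))
      ((a - Complex.exp (2 * Real.pi * I * t))⁻¹) t := by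
    intro t
    have h0 : HasDerivAt (fun s : ℝ => ((s : ℂ))) 1 t := by
      simpa using (hasDerivAt_id t).ofReal_comp
    have hexp : HasDerivAt (fun s : ℝ => Complex.exp (-(2 * Real.pi * I) * s))
        (-(2 * Real.pi * I) * Complex.exp (-(2 * Real.pi * I) * t)) t := by
      have h1 : HasDerivAt (fun s : ℝ => (-(2 * Real.pi * I) * s : ℂ)) (-(2 * Real.pi * I)) t := by
        simpa using h0.const_mul (-(2 * Real.pi * I))
      simpa [mul_comm] using h1.cexp
    have hin : HasDerivAt (fun s : ℝ => (1 - a * Complex.exp (-(2 * Real.pi * I) * s)))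
        (-(a * (-(2 * Real.pi * I) * Complex.exp (-(2 * Real.pi * I) * t)))) t := by
      simpa using ((hexp.const_mul a).const_sub 1)
    have hlog := (hin.clog_real (hslit t)).const_mul (-(2 * Real.pi * I * a)⁻¹)
    convert hlog using 1
    · rfl
    have hpi : ((Real.pi : ℂ)) ≠ 0 := Complex.ofReal_ne_zero.mpr Real.pi_ne_zero
    have hc : (2 * (Real.pi:ℂ) * I * a) ≠ 0 := by
      simp [ha0, hpi, Complex.I_ne_zero]
    have hEe : Complex.exp (2 * Real.pi * I * t) * Complex.exp (-(2 * Real.pi * I) * t) = 1 := by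
      rw [← Complex.exp_add]
      norm_num
    have hfac : (1 : ℂ) - a * Complex.exp (-(2 * Real.pi * I) * t)
        = -(Complex.exp (-(2 * Real.pi * I) * t)) * (a - Complex.exp (2 * Real.pi * I * t)) := by
      linear_combination (-1 : ℂ) * hEe
    rw [eq_comm, show -(a * (-(2 * (Real.pi:ℂ) * I) * Complex.exp (-(2 * Real.pi * I) * t)))
        = (2 * (Real.pi:ℂ) * I * a) * Complex.exp (-(2 * Real.pi * I) * t) from by ring,
      mul_div_assoc, neg_mul, inv_mul_cancel_left₀ hc, hfac, ← neg_div,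
      div_mul_cancel_left₀ (neg_ne_zero.mpr (Complex.exp_ne_zero _))]
  have hcont : Continuous fun t : ℝ => (a - Complex.exp (2 * Real.pi * I * t))⁻¹ := by
    apply Continuous.inv₀
    · exact continuous_const.sub (Complex.continuous_exp.comp (by continuity))
    · exact fun t => hne t
  rw [integral_eq_sub_of_hasDerivAt (fun t _ => hd t) (hcont.intervalIntegrable 0 1)]
  have he1 : Complex.exp (-(2 * Real.pi * I) * (1:ℝ)) = 1 := by
    rw [show (-(2 * Real.pi * I) * (1:ℝ) : ℂ) = -(2 * Real.pi * I) by push_cast; ring]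
    rw [Complex.exp_neg, Complex.exp_two_pi_mul_I]
    norm_num
  have he0 : Complex.exp (-(2 * Real.pi * I) * (0:ℝ)) = 1 := by norm_num
  rw [he1, he0]
  ring

lemma key_identity (lam beta : ℝ) (z : ℂ)
    (hl : (lam:ℂ) ≠ 0) (hlb : ((lam:ℂ)+beta) ≠ 0)
    (hA : ((lam:ℂ) - beta - lam*z) ≠ 0)
    (hB : ((lam:ℂ) - ((lam:ℂ)+beta)*z) ≠ 0)
    (hC : ((lam:ℂ) + beta - lam*z) ≠ 0) :
    Ffun lam beta 0 0 z
      = 1/((lam:ℂ)*((lam:ℂ)+beta)) + (-1/((lam:ℂ)+beta)^2) * ((lam:ℂ)/((lam:ℂ)+beta) - z)⁻¹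
        + (1/(lam:ℂ)^2) * ((((lam:ℂ)+beta)/(lam:ℂ)) - z)⁻¹ := by
  have hdz : (lam:ℂ)/((lam:ℂ)+beta) - z = ((lam:ℂ) - ((lam:ℂ) + beta) * z) / ((lam:ℂ) + beta) := by
    field_simp
  have hez : (((lam:ℂ)+beta)/(lam:ℂ)) - z = ((lam:ℂ) + beta - (lam:ℂ) * z) / (lam:ℂ) := by
    field_simp
  have hlC : ((lam:ℂ) * ((lam:ℂ) + beta - lam*z)) ≠ 0 := mul_ne_zero hl hC
  have frac1 : Ffun lam beta 0 0 z
      = ((1-z)^2 * ((lam:ℂ)*((lam:ℂ) + beta - lam*z)) - ((lam:ℂ) - ((lam:ℂ)+beta)*z) * (2*beta))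
        / (((lam:ℂ) - beta - lam*z) * (((lam:ℂ) - ((lam:ℂ)+beta)*z) * ((lam:ℂ)*((lam:ℂ) + beta - lam*z)))) := by
    simp only [Ffun, pow_zero, Complex.ofReal_zero, mul_zero, neg_mul, neg_zero,
      Complex.exp_zero, one_mul, mul_one]
    rw [div_sub_div _ _ hB hlC, div_mul_div_comm, one_mul]
  have hD1 : ((lam:ℂ)*((lam:ℂ)+beta)) ≠ 0 := mul_ne_zero hl hlb
  have hD2 : (((lam:ℂ)+beta)^2 * ((lam:ℂ) - ((lam:ℂ)+beta)*z)) ≠ 0 :=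
    mul_ne_zero (pow_ne_zero 2 hlb) hB
  have hD3 : ((lam:ℂ)^2 * ((lam:ℂ) + beta - lam*z)) ≠ 0 := mul_ne_zero (pow_ne_zero 2 hl) hC
  have frac2 : 1/((lam:ℂ)*((lam:ℂ)+beta)) + (-1/((lam:ℂ)+beta)^2) * ((lam:ℂ)/((lam:ℂ)+beta) - z)⁻¹
        + (1/(lam:ℂ)^2) * ((((lam:ℂ)+beta)/(lam:ℂ)) - z)⁻¹
      = ((((lam:ℂ) - ((lam:ℂ)+beta)*z) * ((lam:ℂ) + beta - lam*z) - (lam:ℂ)*((lam:ℂ) + beta - lam*z)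
          + ((lam:ℂ)+beta)*((lam:ℂ) - ((lam:ℂ)+beta)*z)))
        / (((lam:ℂ)*((lam:ℂ)+beta)) * (((lam:ℂ) - ((lam:ℂ)+beta)*z) * ((lam:ℂ) + beta - lam*z))) := by
    rw [hdz, hez, inv_div, inv_div, div_mul_div_comm, div_mul_div_comm,
      div_add_div _ _ hD1 hD2, div_add_div _ _ (mul_ne_zero hD1 hD2) hD3,
      div_eq_div_iff (mul_ne_zero (mul_ne_zero hD1 hD2) hD3)
        (mul_ne_zero hD1 (mul_ne_zero hB hC))]
    ring
  rw [frac1, frac2,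
    div_eq_div_iff (mul_ne_zero hA (mul_ne_zero hB hlC))
      (mul_ne_zero hD1 (mul_ne_zero hB hC))]
  ring


/-- for β ≠ 2λ, (σ²/(2β)) ∫₀¹ F_{0,0}(e^{2πit}) dt = σ² / (λβ(λ+β)). -/
theorem stmt14 (lam beta σ : ℝ) (hlam : 0 < lam) (hbeta : 0 < beta) (hne : beta ≠ 2 * lam) :
    ((σ : ℂ) ^ 2 / (2 * beta)) *
        ∫ t in (0 : ℝ)..1, Ffun lam beta 0 0 (Complex.exp (2 * Real.pi * Complex.I * t)) =
      ((σ ^ 2 / (lam * beta * (lam + beta)) : ℝ) : ℂ) := by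
  have hl : (lam : ℂ) ≠ 0 := Complex.ofReal_ne_zero.mpr hlam.ne'
  have hb : (beta : ℂ) ≠ 0 := Complex.ofReal_ne_zero.mpr hbeta.ne'
  have hlbR : 0 < lam + beta := by linarith
  have hlb : ((lam : ℂ) + beta) ≠ 0 := by
    rw [show ((lam : ℂ) + beta) = ((lam + beta : ℝ) : ℂ) by push_cast; ring]
    exact Complex.ofReal_ne_zero.mpr hlbR.ne'
  set dc : ℂ := ((lam / (lam + beta) : ℝ) : ℂ) with hdc_def
  set ec : ℂ := (((lam + beta) / lam : ℝ) : ℂ) with hec_def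
  have hdc : dc = (lam : ℂ) / ((lam : ℂ) + beta) := by rw [hdc_def]; push_cast; ring
  have hec : ec = ((lam : ℂ) + beta) / lam := by rw [hec_def]; push_cast; ring
  have hdabs : ‖dc‖ < 1 := by
    rw [hdc_def, Complex.norm_real, Real.norm_eq_abs, abs_of_pos (by positivity)]
    rw [div_lt_one hlbR]; linarith
  have hd0 : dc ≠ 0 := Complex.ofReal_ne_zero.mpr (by positivity)
  have heabs : 1 < ‖ec‖ := by
    rw [hec_def, Complex.norm_real, Real.norm_eq_abs, abs_of_pos (by positivity)]
    rw [lt_div_iff₀ hlam]; linarith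
  have hdne : ∀ t : ℝ, dc - Complex.exp (2 * Real.pi * Complex.I * t) ≠ 0 :=
    sub_exp_ne dc hdabs.ne
  have hene : ∀ t : ℝ, ec - Complex.exp (2 * Real.pi * Complex.I * t) ≠ 0 :=
    sub_exp_ne ec heabs.ne'
  have h1 : ∀ t : ℝ, ((lam : ℂ) - beta - lam * Complex.exp (2 * Real.pi * Complex.I * t)) ≠ 0 := by
    intro t h
    have h' : (lam : ℂ) * Complex.exp (2 * Real.pi * Complex.I * t) = ((lam - beta : ℝ) : ℂ) := by
      push_cast; linear_combination -h
    have habs := congrArg (‖·‖) h'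
    rw [norm_mul, abs_exp_unit, Complex.norm_real, Complex.norm_real, Real.norm_eq_abs, Real.norm_eq_abs,
      abs_of_pos hlam, mul_one] at habs
    rcases abs_eq hlam.le |>.mp habs.symm with h'' | h''
    · linarith
    · exact hne (by linarith)
  have h2 : ∀ t : ℝ, ((lam : ℂ) - ((lam : ℂ) + beta) * Complex.exp (2 * Real.pi * Complex.I * t)) ≠ 0 := by
    intro t h
    have h' : ((lam + beta : ℝ) : ℂ) * Complex.exp (2 * Real.pi * Complex.I * t) = ((lam : ℝ) : ℂ) := by
      push_cast; linear_combination -h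
    have habs := congrArg (‖·‖) h'
    rw [norm_mul, abs_exp_unit, Complex.norm_real, Complex.norm_real, Real.norm_eq_abs, Real.norm_eq_abs,
      abs_of_pos hlam, abs_of_pos hlbR, mul_one] at habs
    linarith
  have h3 : ∀ t : ℝ, ((lam : ℂ) + beta - lam * Complex.exp (2 * Real.pi * Complex.I * t)) ≠ 0 := by
    intro t h
    have h' : ((lam : ℝ) : ℂ) * Complex.exp (2 * Real.pi * Complex.I * t) = ((lam + beta : ℝ) : ℂ) := by
      push_cast; linear_combination -h
    have habs := congrArg (‖·‖) h'
    rw [norm_mul, abs_exp_unit, Complex.norm_real, Complex.norm_real, Real.norm_eq_abs, Real.norm_eq_abs,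
      abs_of_pos hlam, abs_of_pos hlbR, mul_one] at habs
    linarith
  set C0 : ℂ := 1 / ((lam : ℂ) * ((lam : ℂ) + beta)) with hC0
  set Cd : ℂ := -1 / ((lam : ℂ) + beta) ^ 2 with hCd
  set Ce : ℂ := 1 / (lam : ℂ) ^ 2 with hCe
  have key : ∀ t : ℝ, Ffun lam beta 0 0 (Complex.exp (2 * Real.pi * Complex.I * t))
      = C0 + Cd * (dc - Complex.exp (2 * Real.pi * Complex.I * t))⁻¹
           + Ce * (ec - Complex.exp (2 * Real.pi * Complex.I * t))⁻¹ := by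
    intro t
    rw [hdc, hec, hC0, hCd, hCe]
    exact key_identity lam beta _ hl hlb (h1 t) (h2 t) (h3 t)
  have hcont_exp : Continuous fun t : ℝ => Complex.exp (2 * Real.pi * Complex.I * t) :=
    Complex.continuous_exp.comp (continuous_const.mul Complex.continuous_ofReal)
  have hcd : Continuous fun t : ℝ => (dc - Complex.exp (2 * Real.pi * Complex.I * t))⁻¹ :=
    (continuous_const.sub hcont_exp).inv₀ hdne
  have hce : Continuous fun t : ℝ => (ec - Complex.exp (2 * Real.pi * Complex.I * t))⁻¹ :=
    (continuous_const.sub hcont_exp).inv₀ hene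
  have hint : (∫ t in (0:ℝ)..1, Ffun lam beta 0 0 (Complex.exp (2 * Real.pi * Complex.I * t)))
      = ∫ t in (0:ℝ)..1, (C0 + Cd * (dc - Complex.exp (2 * Real.pi * Complex.I * t))⁻¹
           + Ce * (ec - Complex.exp (2 * Real.pi * Complex.I * t))⁻¹) :=
    intervalIntegral.integral_congr fun t _ => key t
  rw [hint]
  rw [intervalIntegral.integral_add
        (f := fun t : ℝ => C0 + Cd * (dc - Complex.exp (2 * Real.pi * Complex.I * t))⁻¹)
        (g := fun t : ℝ => Ce * (ec - Complex.exp (2 * Real.pi * Complex.I * t))⁻¹)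
        (((continuous_const.add (continuous_const.mul hcd))).intervalIntegrable 0 1)
        ((continuous_const.mul hce).intervalIntegrable 0 1),
      intervalIntegral.integral_add
        ((continuous_const : Continuous fun _ : ℝ => C0).intervalIntegrable 0 1)
        (g := fun t : ℝ => Cd * (dc - Complex.exp (2 * Real.pi * Complex.I * t))⁻¹)
        ((continuous_const.mul hcd).intervalIntegrable 0 1),
      intervalIntegral.integral_const_mul, intervalIntegral.integral_const_mul,
      intervalIntegral.integral_const,
      integral_inv_lt dc hdabs hd0, integral_inv_gt ec heabs]
  simp only [sub_zero, smul_eq_mul, mul_zero, add_zero, mul_one, one_smul]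
  rw [hC0, hCe, hec]
  have hD1 : ((lam:ℂ)*((lam:ℂ)+beta)) ≠ 0 := mul_ne_zero hl hlb
  have hD3 : ((lam:ℂ)^2*((lam:ℂ)+beta)) ≠ 0 := mul_ne_zero (pow_ne_zero 2 hl) hlb
  have hX : 1/((lam:ℂ)*((lam:ℂ)+beta)) + (1/(lam:ℂ)^2) * ((((lam:ℂ)+beta)/(lam:ℂ)))⁻¹
      = 2/((lam:ℂ)*((lam:ℂ)+beta)) := by
    rw [inv_div, div_mul_div_comm, one_mul, div_add_div _ _ hD1 hD3,
      div_eq_div_iff (mul_ne_zero hD1 hD3) hD1]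
    ring
  rw [hX]
  have h2b : ((2:ℂ)*beta) ≠ 0 := by
    simp [hb]
  have hR : ((lam:ℂ)*beta*((lam:ℂ)+beta)) ≠ 0 := mul_ne_zero (mul_ne_zero hl hb) hlb
  push_cast
  rw [div_mul_div_comm, div_eq_div_iff (mul_ne_zero h2b hD1) hR]
  ring
end
end
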